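/- Let N ≥ 1 and let γ, δ ∈ ℝ^{N} be vectors with nonnegative entries indexed by 0,…,N-1 satisfying ‖γ‖₂² + ‖δ‖₂² ≤ N. Then 2 ∑_{d=1}^{N-1} (1/d) ∑_{i=0}^{d-1} γ_i δ_{d-1-i} ≤ π N. -/

import Mathlib

lemma my_arctan_ge (t : ℝ) (ht : 0 ≤ t) : 3*t/(3+t^2) ≤ Real.arctan t := by
  have key : ∀ x : ℝ, HasDerivAt (fun y => Real.arctan y - 3*y/(3+y^2))
      (4*x^4/((1+x^2)*(3+x^2)^2)) x := by
    intro x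
    have h1 : HasDerivAt Real.arctan (1/(1+x^2)) x := Real.hasDerivAt_arctan x
    have hb : HasDerivAt (fun y : ℝ => 3+y^2) (2*x) x := by
      simpa using (hasDerivAt_pow 2 x).const_add 3
    have ha : HasDerivAt (fun y : ℝ => 3*y) 3 x := by
      simpa using (hasDerivAt_id x).const_mul 3
    have hbne : (3+x^2) ≠ 0 := by positivity
    have h2 := ha.div hb hbne
    have := h1.sub h2
    refine this.congr_deriv ?_
    have h1ne : (1+x^2) ≠ 0 := by positivity
    field_simp
    ring
  have mono : MonotoneOn (fun y => Real.arctan y - 3*y/(3+y^2)) (Set.Ici 0) := by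
    apply monotoneOn_of_deriv_nonneg (convex_Ici 0)
    · exact fun x _ => ((key x).continuousAt).continuousWithinAt
    · exact fun x _ => ((key x).differentiableAt).differentiableWithinAt
    · intro x _
      rw [(key x).deriv]
      positivity
  have h0 := mono (Set.self_mem_Ici) (Set.mem_Ici.2 ht) ht
  simp only [Real.arctan_zero] at h0
  norm_num at h0
  linarith

lemma my_F_deriv (m : ℝ) (hm : 0 < m) (x : ℝ) (hx : 0 < x) :
    HasDerivAt (fun y => 2 * Real.arctan (Real.sqrt (y/m)))
      (Real.sqrt m / ((m + x) * Real.sqrt x)) x := by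
  have h1 : HasDerivAt (fun y : ℝ => y/m) (1/m) x := by
    simpa using (hasDerivAt_id x).div_const m
  have h2 : HasDerivAt Real.sqrt (1/(2*Real.sqrt (x/m))) (x/m) :=
    Real.hasDerivAt_sqrt (by positivity)
  have h3 : HasDerivAt Real.arctan (1/(1+(Real.sqrt (x/m))^2)) (Real.sqrt (x/m)) :=
    Real.hasDerivAt_arctan _
  have h4 := ((h3.comp x (h2.comp x h1)).const_mul 2)
  refine h4.congr_deriv ?_
  have hs : Real.sqrt (x/m) = Real.sqrt x / Real.sqrt m := Real.sqrt_div hx.le m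
  have hx2 : (Real.sqrt x)^2 = x := Real.sq_sqrt hx.le
  have hm2 : (Real.sqrt m)^2 = m := Real.sq_sqrt hm.le
  have hxp : (0:ℝ) < Real.sqrt x := Real.sqrt_pos.2 hx
  have hmp : (0:ℝ) < Real.sqrt m := Real.sqrt_pos.2 hm
  rw [hs]
  rw [← hx2, ← hm2]
  have h5 : (Real.sqrt m)^2 + (Real.sqrt x)^2 ≠ 0 := by positivity
  field_simp
  rw [Real.sqrt_sq hmp.le, Real.sqrt_sq hxp.le]
lemma my_step (m : ℝ) (hm : 0 < m) (a : ℝ) (ha : 0 < a) :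
    Real.sqrt m / ((m + (a+1)) * Real.sqrt (a+1)) ≤
      2 * Real.arctan (Real.sqrt ((a+1)/m)) - 2 * Real.arctan (Real.sqrt (a/m)) := by
  set c := Real.sqrt m / ((m + (a+1)) * Real.sqrt (a+1)) with hc
  have mono : MonotoneOn (fun y => 2 * Real.arctan (Real.sqrt (y/m)) - c * y)
      (Set.Icc a (a+1)) := by
    apply monotoneOn_of_deriv_nonneg (convex_Icc a (a+1))
    · apply Continuous.continuousOn
      exact (continuous_const.mul (Real.continuous_arctan.comp (Real.continuous_sqrt.comp
        (continuous_id.div_const m)))).sub (continuous_const.mul continuous_id)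
    · intro x hx
      rw [interior_Icc] at hx
      have hx0 : 0 < x := lt_trans ha hx.1
      have hcy : HasDerivAt (fun y : ℝ => c * y) c x := by
        simpa using (hasDerivAt_id x).const_mul c
      exact ((my_F_deriv m hm x hx0).sub hcy).differentiableAt.differentiableWithinAt
    · intro x hx
      rw [interior_Icc] at hx
      have hx0 : 0 < x := lt_trans ha hx.1
      have hcy : HasDerivAt (fun y : ℝ => c * y) c x := by
        simpa using (hasDerivAt_id x).const_mul c
      rw [HasDerivAt.deriv (f := fun y => 2 * Real.arctan (Real.sqrt (y/m)) - c * y) ((my_F_deriv m hm x hx0).sub hcy)]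
      have hle : c ≤ Real.sqrt m / ((m + x) * Real.sqrt x) := by
        rw [hc]
        apply div_le_div_of_nonneg_left (Real.sqrt_nonneg m) (by positivity)
        have h1 : Real.sqrt x ≤ Real.sqrt (a+1) := Real.sqrt_le_sqrt (by linarith [hx.2])
        have h2 : (0:ℝ) < Real.sqrt x := Real.sqrt_pos.2 hx0
        nlinarith [hx.2]
      simpa using sub_nonneg.2 hle
  have h := mono (Set.mem_Icc.2 ⟨le_refl a, by linarith⟩)
      (Set.mem_Icc.2 ⟨by linarith, le_refl (a+1)⟩) (by linarith)
  simp only at h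
  nlinarith [h]
lemma my_first (m : ℝ) (hm : 0 < m) :
    Real.sqrt m / ((m + 1/2) * Real.sqrt (1/2)) ≤ 2 * Real.arctan (Real.sqrt ((1/2)/m)) := by
  set t := Real.sqrt ((1/2)/m) with hts
  have ht0 : 0 < t := Real.sqrt_pos.2 (by positivity)
  have ht2m : t^2 * m = 1/2 := by
    rw [hts, Real.sq_sqrt (by positivity)]; field_simp
  have hr0 : (0:ℝ) < Real.sqrt m := Real.sqrt_pos.2 hm
  have hw : Real.sqrt ((1:ℝ)/2) = t * Real.sqrt m := by
    rw [hts, ← Real.sqrt_mul (by positivity)]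
    congr 1; field_simp
  rw [hw]
  have e : 6*t^2*(m+1/2) = 3 + 3*t^2 := by linear_combination 6*ht2m
  have key : Real.sqrt m / ((m + 1/2) * (t * Real.sqrt m)) ≤ 2 * (3*t/(3+t^2)) := by
    rw [div_le_iff₀ (by positivity)]
    have expand : 2 * (3*t/(3+t^2)) * ((m + 1/2) * (t * Real.sqrt m))
        = 6*t^2*(m+1/2) * Real.sqrt m / (3+t^2) := by
      field_simp; ring
    rw [expand, e, le_div_iff₀ (by positivity)]
    nlinarith [mul_nonneg (sq_nonneg t) hr0.le]
  calc Real.sqrt m / ((m + 1/2) * (t * Real.sqrt m)) ≤ 2 * (3*t/(3+t^2)) := key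
    _ ≤ 2 * Real.arctan t := by linarith [my_arctan_ge t ht0.le]

lemma my_rowsum (m : ℝ) (hm : 0 < m) (M : ℕ) :
    ∑ j ∈ Finset.range M, Real.sqrt m / ((m + ((j:ℝ)+1/2)) * Real.sqrt ((j:ℝ)+1/2))
      ≤ Real.pi := by
  set u : ℕ → ℝ := fun j => 2 * Real.arctan (Real.sqrt (((j:ℝ) - 1/2)/m)) with hu
  have hu0 : u 0 = 0 := by
    simp only [hu, Nat.cast_zero]
    rw [show ((0:ℝ) - 1/2)/m = (-(1/2))/m by ring]
    rw [Real.sqrt_eq_zero'.2 (div_nonpos_of_nonpos_of_nonneg (by norm_num) hm.le),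
      Real.arctan_zero, mul_zero]
  have step : ∀ j : ℕ,
      Real.sqrt m / ((m + ((j:ℝ)+1/2)) * Real.sqrt ((j:ℝ)+1/2)) ≤ u (j+1) - u j := by
    intro j
    rcases Nat.eq_zero_or_pos j with hj | hj
    · subst hj
      rw [hu0, sub_zero]
      simp only [hu]
      have e1 : ((0:ℕ):ℝ) + 1/2 = 1/2 := by norm_num
      have e2 : (((0+1:ℕ)):ℝ) - 1/2 = (1:ℝ)/2 := by norm_num
      rw [e1, e2]
      have := my_first m hm
      rw [show ((1:ℝ)/2)/m = (1/2)/m from rfl] at this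
      exact this
    · set a := (j:ℝ) - 1/2 with hadef
      have ha : 0 < a := by
        have : (1:ℝ) ≤ (j:ℝ) := by exact_mod_cast hj
        simp only [hadef]; linarith
      have h1 : ((j:ℝ)+1/2) = a + 1 := by simp only [hadef]; ring
      have h2 : (((j+1:ℕ)):ℝ) - 1/2 = a + 1 := by push_cast; simp only [hadef]; ring
      rw [h1]
      simp only [hu, h2]
      exact my_step m hm a ha
  calc ∑ j ∈ Finset.range M, Real.sqrt m / ((m + ((j:ℝ)+1/2)) * Real.sqrt ((j:ℝ)+1/2))
      ≤ ∑ j ∈ Finset.range M, (u (j+1) - u j) := Finset.sum_le_sum (fun j _ => step j)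
    _ = u M - u 0 := Finset.sum_range_sub u M
    _ = u M := by rw [hu0, sub_zero]
    _ ≤ Real.pi := by
        have := Real.arctan_lt_pi_div_two (Real.sqrt (((M:ℝ) - 1/2)/m))
        simp only [hu]
        linarith
noncomputable def hkA (i j : ℕ) : ℝ :=
  Real.sqrt ((i:ℝ)+1/2) / (((i:ℝ)+(j:ℝ)+1) * Real.sqrt ((j:ℝ)+1/2))


lemma hkA_nonneg (i j : ℕ) : 0 ≤ hkA i j := by
  unfold hkA; positivity

lemma hkA_rowsum (i M : ℕ) : ∑ j ∈ Finset.range M, hkA i j ≤ Real.pi := by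
  have h := my_rowsum ((i:ℝ)+1/2) (by positivity) M
  refine le_trans (le_of_eq (Finset.sum_congr rfl fun j _ => ?_)) h
  unfold hkA
  congr 2
  ring

lemma my_amgm (i j : ℕ) (x y : ℝ) (hx : 0 ≤ x) (hy : 0 ≤ y) :
    (1/((i:ℝ)+(j:ℝ)+1)) * (x*y) ≤ (1/2) * (x^2 * hkA i j + y^2 * hkA j i) := by
  have hr0 : (0:ℝ) < Real.sqrt ((i:ℝ)+1/2) := Real.sqrt_pos.2 (by positivity)
  have hs0 : (0:ℝ) < Real.sqrt ((j:ℝ)+1/2) := Real.sqrt_pos.2 (by positivity)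
  have hd : (0:ℝ) < (i:ℝ)+(j:ℝ)+1 := by positivity
  set r := Real.sqrt ((i:ℝ)+1/2)
  set s := Real.sqrt ((j:ℝ)+1/2)
  set d := (i:ℝ)+(j:ℝ)+1 with hdd
  have hAij : hkA i j = r / (d * s) := rfl
  have hAji : hkA j i = s / (d * r) := by
    unfold hkA
    rw [show (j:ℝ)+(i:ℝ)+1 = d by rw [hdd]; ring]
  rw [hAij, hAji]
  have expand : (1/2) * (x^2 * (r/(d*s)) + y^2 * (s/(d*r))) - (1/d) * (x*y)
      = (x*r - y*s)^2 / (2*d*r*s) := by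
    field_simp
    ring
  have h1 : 0 ≤ (x*r - y*s)^2 / (2*d*r*s) := by positivity
  linarith [expand, h1]

lemma tri_reindex (M : ℕ) (f : ℕ → ℕ → ℝ) :
    ∑ d ∈ Finset.Icc 1 M, ∑ i ∈ Finset.range d, f i (d-1-i)
      = ∑ i ∈ Finset.range M, ∑ j ∈ Finset.range (M - i), f i j := by
  rw [Finset.sum_sigma' (Finset.Icc 1 M) (fun d => Finset.range d) (fun d i => f i (d-1-i)),
    Finset.sum_sigma' (Finset.range M) (fun i => Finset.range (M - i)) (fun i j => f i j)]
  apply Finset.sum_bij' (fun p _ => (⟨p.2, p.1 - 1 - p.2⟩ : Σ _ : ℕ, ℕ))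
      (fun p _ => (⟨p.1 + p.2 + 1, p.1⟩ : Σ _ : ℕ, ℕ))
  · intro a ha
    simp only [Finset.mem_sigma, Finset.mem_Icc, Finset.mem_range] at ha ⊢
    omega
  · intro a ha
    simp only [Finset.mem_sigma, Finset.mem_Icc, Finset.mem_range] at ha ⊢
    omega
  · intro a ha
    obtain ⟨d, i⟩ := a
    simp only [Finset.mem_sigma, Finset.mem_Icc, Finset.mem_range] at ha
    rw [show i + (d - 1 - i) + 1 = d from by omega]
  · intro a ha
    obtain ⟨i, j⟩ := a
    simp only [Finset.mem_sigma, Finset.mem_Icc, Finset.mem_range] at ha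
    rw [show i + j + 1 - 1 - i = j from by omega]
  · intro a ha
    obtain ⟨d, i⟩ := a
    simp only [Finset.mem_sigma, Finset.mem_Icc, Finset.mem_range] at ha
    rfl

lemma tri_swap (M : ℕ) (f : ℕ → ℕ → ℝ) :
    ∑ i ∈ Finset.range M, ∑ j ∈ Finset.range (M - i), f i j
      = ∑ j ∈ Finset.range M, ∑ i ∈ Finset.range (M - j), f i j := by
  rw [Finset.sum_sigma' (Finset.range M) (fun i => Finset.range (M - i)) (fun i j => f i j),
    Finset.sum_sigma' (Finset.range M) (fun j => Finset.range (M - j)) (fun j i => f i j)]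
  apply Finset.sum_bij' (fun p _ => (⟨p.2, p.1⟩ : Σ _ : ℕ, ℕ))
      (fun p _ => (⟨p.2, p.1⟩ : Σ _ : ℕ, ℕ))
  · intro a ha
    simp only [Finset.mem_sigma, Finset.mem_range] at ha ⊢
    omega
  · intro a ha
    simp only [Finset.mem_sigma, Finset.mem_range] at ha ⊢
    omega
  · intro a _
    rfl
  · intro a _
    rfl
  · intro a _
    rfl

open scoped BigOperators

/-- If `γ, δ ∈ ℝ^N` have nonnegative entries and `‖γ‖² + ‖δ‖² ≤ N`, then
`2 ∑_{d=1}^{N-1} (1/d) ∑_{i=0}^{d-1} γ_i δ_{d-1-i} ≤ π N`. -/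
theorem weighted_convolution_le_pi_N (N : ℕ) (hN : 1 ≤ N) (γ δ : ℕ → ℝ)
    (hγ : ∀ i, 0 ≤ γ i) (hδ : ∀ i, 0 ≤ δ i)
    (hnorm : (∑ i ∈ Finset.range N, ((γ i) ^ 2 + (δ i) ^ 2)) ≤ N) :
    2 * ∑ d ∈ Finset.Icc 1 (N - 1), (1 / (d : ℝ)) *
        ∑ i ∈ Finset.range d, γ i * δ (d - 1 - i) ≤ Real.pi * N := by
  have hπ := Real.pi_pos
  have h1 : ∑ d ∈ Finset.Icc 1 (N-1), (1/(d:ℝ)) * ∑ i ∈ Finset.range d, γ i * δ (d-1-i)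
      ≤ ∑ d ∈ Finset.Icc 1 (N-1), ∑ i ∈ Finset.range d,
          (1/2) * ((γ i)^2 * hkA i (d-1-i) + (δ (d-1-i))^2 * hkA (d-1-i) i) := by
    apply Finset.sum_le_sum
    intro d hd
    rw [Finset.mul_sum]
    apply Finset.sum_le_sum
    intro i hi
    have hid : i < d := Finset.mem_range.mp hi
    have hcast : ((i:ℝ) + ((d-1-i : ℕ):ℝ) + 1) = (d:ℝ) := by
      have h : i + (d - 1 - i) + 1 = d := by omega
      exact_mod_cast congrArg (fun n : ℕ => (n:ℝ)) h
    have h := my_amgm i (d-1-i) (γ i) (δ (d-1-i)) (hγ i) (hδ _)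
    rw [hcast] at h
    exact h
  have h2 : ∑ d ∈ Finset.Icc 1 (N-1), ∑ i ∈ Finset.range d,
          (1/2) * ((γ i)^2 * hkA i (d-1-i) + (δ (d-1-i))^2 * hkA (d-1-i) i)
      = ∑ i ∈ Finset.range (N-1), ∑ j ∈ Finset.range (N-1-i),
          (1/2) * ((γ i)^2 * hkA i j + (δ j)^2 * hkA j i) :=
    tri_reindex (N-1) (fun i j => (1/2) * ((γ i)^2 * hkA i j + (δ j)^2 * hkA j i))
  have h3 : ∑ i ∈ Finset.range (N-1), ∑ j ∈ Finset.range (N-1-i),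
          (1/2) * ((γ i)^2 * hkA i j + (δ j)^2 * hkA j i)
      = (1/2) * ((∑ i ∈ Finset.range (N-1), ∑ j ∈ Finset.range (N-1-i), (γ i)^2 * hkA i j)
          + ∑ i ∈ Finset.range (N-1), ∑ j ∈ Finset.range (N-1-i), (δ j)^2 * hkA j i) := by
    rw [mul_add, Finset.mul_sum, Finset.mul_sum, ← Finset.sum_add_distrib]
    apply Finset.sum_congr rfl
    intro i _
    rw [Finset.mul_sum, Finset.mul_sum, ← Finset.sum_add_distrib]
    apply Finset.sum_congr rfl
    intro j _
    ring
  have hX : ∑ i ∈ Finset.range (N-1), ∑ j ∈ Finset.range (N-1-i), (γ i)^2 * hkA i j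
      ≤ Real.pi * ∑ i ∈ Finset.range N, (γ i)^2 := by
    calc ∑ i ∈ Finset.range (N-1), ∑ j ∈ Finset.range (N-1-i), (γ i)^2 * hkA i j
        = ∑ i ∈ Finset.range (N-1), (γ i)^2 * ∑ j ∈ Finset.range (N-1-i), hkA i j :=
          Finset.sum_congr rfl fun i _ => (Finset.mul_sum _ _ _).symm
      _ ≤ ∑ i ∈ Finset.range (N-1), (γ i)^2 * Real.pi :=
          Finset.sum_le_sum fun i _ => mul_le_mul_of_nonneg_left (hkA_rowsum i _) (sq_nonneg _)
      _ ≤ ∑ i ∈ Finset.range N, (γ i)^2 * Real.pi := by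
          apply Finset.sum_le_sum_of_subset_of_nonneg (Finset.range_subset_range.2 (by omega))
          intro i _ _
          positivity
      _ = Real.pi * ∑ i ∈ Finset.range N, (γ i)^2 := by
          rw [← Finset.sum_mul, mul_comm]
  have hY : ∑ i ∈ Finset.range (N-1), ∑ j ∈ Finset.range (N-1-i), (δ j)^2 * hkA j i
      ≤ Real.pi * ∑ j ∈ Finset.range N, (δ j)^2 := by
    rw [tri_swap (N-1) (fun i j => (δ j)^2 * hkA j i)]
    calc ∑ j ∈ Finset.range (N-1), ∑ i ∈ Finset.range (N-1-j), (δ j)^2 * hkA j i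
        = ∑ j ∈ Finset.range (N-1), (δ j)^2 * ∑ i ∈ Finset.range (N-1-j), hkA j i :=
          Finset.sum_congr rfl fun j _ => (Finset.mul_sum _ _ _).symm
      _ ≤ ∑ j ∈ Finset.range (N-1), (δ j)^2 * Real.pi :=
          Finset.sum_le_sum fun j _ => mul_le_mul_of_nonneg_left (hkA_rowsum j _) (sq_nonneg _)
      _ ≤ ∑ j ∈ Finset.range N, (δ j)^2 * Real.pi := by
          apply Finset.sum_le_sum_of_subset_of_nonneg (Finset.range_subset_range.2 (by omega))
          intro j _ _
          positivity
      _ = Real.pi * ∑ j ∈ Finset.range N, (δ j)^2 := by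
          rw [← Finset.sum_mul, mul_comm]
  have hsum : (∑ i ∈ Finset.range N, (γ i)^2) + ∑ i ∈ Finset.range N, (δ i)^2 ≤ (N:ℝ) := by
    rw [← Finset.sum_add_distrib]
    exact hnorm
  calc 2 * ∑ d ∈ Finset.Icc 1 (N - 1), (1 / (d : ℝ)) *
          ∑ i ∈ Finset.range d, γ i * δ (d - 1 - i)
      ≤ 2 * ((1/2) * ((∑ i ∈ Finset.range (N-1), ∑ j ∈ Finset.range (N-1-i), (γ i)^2 * hkA i j)
          + ∑ i ∈ Finset.range (N-1), ∑ j ∈ Finset.range (N-1-i), (δ j)^2 * hkA j i)) := by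
        rw [h2, h3] at h1
        linarith
    _ ≤ Real.pi * ((∑ i ∈ Finset.range N, (γ i)^2) + ∑ i ∈ Finset.range N, (δ i)^2) := by
        rw [mul_add]
        linarith
    _ ≤ Real.pi * N := mul_le_mul_of_nonneg_left hsum hπ.le
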